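/- Let a ≠ b be real numbers and let G_{ABR}(t) = (e^{at} − e^{bt})/(a − b) be the Abe–Borges–Roditi group exponential. Under the same hypotheses as in the Fisher metric group theorem (p : ℝ^m → X → ℝ a positive parametrized family of probability densities, differentiation under the integral sign valid up to second order at θ₀ for A(θ) = ∫_X p(θ)(x) G_{ABR}(ln(p(θ)(x)/p(θ₀)(x))) dμ, and ∫_X ∂_j p(θ₀) dμ = 0 = ∫_X ∂_j ∂_k p(θ₀) dμ), the Hessian entry ∂_j ∂_k A(θ₀) equals (1 + a + b) · g_{jk}(θ₀), where g_{jk}(θ₀) is the standard Fisher information matrix; in particular G_{ABR}'(0) = 1 and G_{ABR}''(0) = a + b. -/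

import Mathlib

open MeasureTheory Filter Topology

private lemma expD (c t : ℝ) :
    HasDerivAt (fun t => Real.exp (c * t)) (c * Real.exp (c * t)) t := by
  simpa [mul_comm] using ((hasDerivAt_id t).const_mul c).exp

private lemma eq_deriv_of_rat {f g : ℝ → ℝ} {s₀ L L' : ℝ}
    (hf : HasDerivAt f L s₀) (hg : HasDerivAt g L' s₀)
    (h0 : f s₀ = g s₀) (hq : ∀ q : ℚ, f q = g q) : L = L' := by
  set S : Set ℝ := Set.range ((↑) : ℚ → ℝ) \ {s₀} with hS
  have hdense : Dense S := Rat.denseRange_cast.diff_singleton s₀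
  haveI hne : (𝓝[S] s₀).NeBot :=
    mem_closure_iff_nhdsWithin_neBot.mp (hdense s₀)
  have hsub : S ⊆ {s₀}ᶜ := fun y hy => hy.2
  have h1 := (hasDerivAt_iff_tendsto_slope.mp hf).mono_left (nhdsWithin_mono _ hsub)
  have h2 := (hasDerivAt_iff_tendsto_slope.mp hg).mono_left (nhdsWithin_mono _ hsub)
  have heq : slope f s₀ =ᶠ[𝓝[S] s₀] slope g s₀ := by
    refine eventually_nhdsWithin_of_forall fun y hy => ?_
    obtain ⟨⟨q, rfl⟩, -⟩ := hy
    simp [slope_def_field, hq q, h0]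
  exact tendsto_nhds_unique (h1.congr' heq) h2
/-- (Fisher metric group, Abe–Borges–Roditi class.) For the
Abe–Borges–Roditi group exponential `G_ABR(t) = (exp(at) - exp(bt))/(a-b)` with
`a ≠ b`, one has `G_ABR'(0) = 1`, `G_ABR''(0) = a + b`, and the Hessian at `θ = θ₀`
of `A(θ) = ∫ p(θ)(x) · G_ABR(ln (p(θ)(x)/p(θ₀)(x))) dμ` equals
`(1 + a + b) · g_{jk}(θ₀)`, where `g_{jk}(θ₀)` is the standard Fisher information
matrix.

Here `p₁ i θ x` is the `i`-th first partial derivative of `θ ↦ p θ x`, `p₂` is the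
mixed second partial `∂_j ∂_k p` at `θ₀`, `dA` is the partial derivative of `A` in
the `k`-th direction (along the `j`-line through `θ₀`), and the hypotheses
`hq₁, hDUI₁, hq₂, hDUI₂` express that differentiation under the integral sign is
valid up to second order at `θ₀`. -/
theorem fisher_metric_group_abe_borges_roditi
    {X : Type*} [MeasurableSpace X] (μ : Measure X) {m : ℕ}
    (a b : ℝ) (hab : a ≠ b) (G : ℝ → ℝ)
    (hG : ∀ t, G t = (Real.exp (a * t) - Real.exp (b * t)) / (a - b))
    (p : (Fin m → ℝ) → X → ℝ)
    -- `p` is a parametrized family of probability densities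
    (hppos : ∀ θ : Fin m → ℝ, ∀ᵐ x ∂μ, 0 < p θ x)
    (hpone : ∀ θ : Fin m → ℝ, ∫ x, p θ x ∂μ = 1)
    (θ₀ : Fin m → ℝ) (j k : Fin m)
    -- for μ-a.e. x, the map θ ↦ p θ x has first partial derivatives `p₁ i θ x` ...
    (p₁ : Fin m → (Fin m → ℝ) → X → ℝ)
    (hp₁ : ∀ᵐ x ∂μ, ∀ (i : Fin m) (θ : Fin m → ℝ),
      HasDerivAt (fun s => p (Function.update θ i s) x) (p₁ i θ x) (θ i))
    -- ... and the mixed second partial derivative `∂_j ∂_k p = p₂` at θ₀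
    (p₂ : X → ℝ)
    (hp₂ : ∀ᵐ x ∂μ, HasDerivAt (fun s => p₁ k (Function.update θ₀ j s) x) (p₂ x) (θ₀ j))
    -- `A θ = D_G(p θ ‖ p θ₀)`, and `dA = ∂_k A` along the j-line through θ₀
    (A dA : (Fin m → ℝ) → ℝ)
    (hA : ∀ θ, A θ = ∫ x, p θ x * G (Real.log (p θ x / p θ₀ x)) ∂μ)
    (hdA : ∀ s : ℝ, HasDerivAt
      (fun t => A (Function.update (Function.update θ₀ j s) k t))
      (dA (Function.update θ₀ j s)) (Function.update θ₀ j s k))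
    -- differentiation under the integral sign is valid to first order ...
    (q₁ : ℝ → X → ℝ)
    (hq₁ : ∀ᵐ x ∂μ, ∀ s : ℝ, HasDerivAt
      (fun t => p (Function.update (Function.update θ₀ j s) k t) x *
        G (Real.log (p (Function.update (Function.update θ₀ j s) k t) x / p θ₀ x)))
      (q₁ s x) (Function.update θ₀ j s k))
    (hDUI₁ : ∀ s : ℝ, dA (Function.update θ₀ j s) = ∫ x, q₁ s x ∂μ)
    -- ... and to second order at θ₀
    (q₂ : X → ℝ)
    (hq₂ : ∀ᵐ x ∂μ, HasDerivAt (fun s => q₁ s x) (q₂ x) (θ₀ j))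
    (hDUI₂ : HasDerivAt (fun s => ∫ x, q₁ s x ∂μ) (∫ x, q₂ x ∂μ) (θ₀ j))
    -- the integrals of the derivatives of `p` vanish at θ₀
    (hvan₁ : ∫ x, p₁ j θ₀ x ∂μ = 0)
    (hvan₂ : ∫ x, p₂ x ∂μ = 0)
    -- (integrability of the pieces)
    (hint₂ : Integrable p₂ μ)
    (hfish : Integrable
      (fun x => p θ₀ x * ((p₁ j θ₀ x / p θ₀ x) * (p₁ k θ₀ x / p θ₀ x))) μ) :
    deriv G 0 = 1 ∧ deriv (deriv G) 0 = a + b ∧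
    HasDerivAt (fun s => dA (Function.update θ₀ j s))
      ((1 + a + b) *
        ∫ x, p θ₀ x * ((p₁ j θ₀ x / p θ₀ x) * (p₁ k θ₀ x / p θ₀ x)) ∂μ)
      (θ₀ j) := by

  have hGfun : G = fun t => (Real.exp (a * t) - Real.exp (b * t)) / (a - b) := funext hG
  have hab' : a - b ≠ 0 := sub_ne_zero.mpr hab
  have hG1 : ∀ t, HasDerivAt (fun t => (Real.exp (a * t) - Real.exp (b * t)) / (a - b))
      ((a * Real.exp (a * t) - b * Real.exp (b * t)) / (a - b)) t :=
    fun t => ((expD a t).sub (expD b t)).div_const _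
  have hGder : ∀ t, HasDerivAt G
      ((a * Real.exp (a * t) - b * Real.exp (b * t)) / (a - b)) t := by
    intro t; rw [hGfun]; exact hG1 t
  refine ⟨?_, ?_, ?_⟩
  · rw [(hGder 0).deriv]
    simp [div_self hab']
  · have h2 : deriv G = fun t => (a * Real.exp (a * t) - b * Real.exp (b * t)) / (a - b) :=
      funext fun t => (hGder t).deriv
    rw [h2]
    have h3 : HasDerivAt (fun t => (a * Real.exp (a * t) - b * Real.exp (b * t)) / (a - b))
        ((a * (a * Real.exp (a * 0)) - b * (b * Real.exp (b * 0))) / (a - b)) 0 :=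
      (((expD a 0).const_mul a).sub ((expD b 0).const_mul b)).div_const _
    rw [h3.deriv]
    field_simp
    simp only [mul_zero, zero_mul, Real.exp_zero]
    ring
  · -- main part
    set H : ℝ → ℝ := fun t => ((Real.exp (a * t) - Real.exp (b * t)) +
        (a * Real.exp (a * t) - b * Real.exp (b * t))) / (a - b) with hHdef
    have hHder : HasDerivAt H (1 + a + b) 0 := by
      have h4 : HasDerivAt H (((a * Real.exp (a * 0) - b * Real.exp (b * 0)) +
          (a * (a * Real.exp (a * 0)) - b * (b * Real.exp (b * 0)))) / (a - b)) 0 :=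
        (((expD a 0).sub (expD b 0)).add
          (((expD a 0).const_mul a).sub ((expD b 0).const_mul b))).div_const _
      convert h4 using 1
      simp only [mul_zero, Real.exp_zero, mul_one]
      field_simp
      ring
    have hH0 : H 0 = 1 := by
      simp only [hHdef, mul_zero, Real.exp_zero]
      field_simp
      ring
    have hq2ae : ∀ᵐ x ∂μ, q₂ x = p₂ x + (1 + a + b) *
        (p θ₀ x * ((p₁ j θ₀ x / p θ₀ x) * (p₁ k θ₀ x / p θ₀ x))) := by
      have hrat : ∀ᵐ x ∂μ, ∀ q : ℚ, 0 < p (Function.update θ₀ j (q : ℝ)) x :=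
        ae_all_iff.mpr fun q => hppos _
      filter_upwards [hp₁, hp₂, hq₁, hq₂, hppos θ₀, hrat]
        with x hp₁x hp₂x hq₁x hq₂x hpos hratx
      have hcne : p θ₀ x ≠ 0 := hpos.ne'
      -- Step 1: identify q₁ on points of positivity
      have step1 : ∀ s : ℝ, 0 < p (Function.update θ₀ j s) x →
          q₁ s x = p₁ k (Function.update θ₀ j s) x *
            H (Real.log (p (Function.update θ₀ j s) x / p θ₀ x)) := by
        intro s hs
        set θs := Function.update θ₀ j s with hθs
        have hu : HasDerivAt (fun t => p (Function.update θs k t) x) (p₁ k θs x) (θs k) :=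
          hp₁x k θs
        have hueq : p (Function.update θs k (θs k)) x = p θs x := by
          rw [Function.update_eq_self]
        have hsne : p θs x ≠ 0 := hs.ne'
        have hdne : p (Function.update θs k (θs k)) x / p θ₀ x ≠ 0 := by
          rw [hueq]; exact (div_pos hs hpos).ne'
        have hL : HasDerivAt
            (fun t => Real.log (p (Function.update θs k t) x / p θ₀ x))
            (p₁ k θs x / p θs x) (θs k) := by
          have h5 := (Real.hasDerivAt_log hdne).comp (θs k) (hu.div_const (p θ₀ x))
          have : (p (Function.update θs k (θs k)) x / p θ₀ x)⁻¹ * (p₁ k θs x / p θ₀ x)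
              = p₁ k θs x / p θs x := by
            rw [hueq]; field_simp
          rw [this] at h5
          exact h5
        set L0 : ℝ := Real.log (p θs x / p θ₀ x) with hL0
        have hptL : Real.log (p (Function.update θs k (θs k)) x / p θ₀ x) = L0 := by
          rw [hueq]
        have hGpt : HasDerivAt G ((a * Real.exp (a * L0) - b * Real.exp (b * L0)) / (a - b))
            ((fun t => Real.log (p (Function.update θs k t) x / p θ₀ x)) (θs k)) := by
          simpa [hptL] using hGder L0
        have hGL := hGpt.comp (θs k) hL
        have hF := hu.mul hGL
        have hval := (hq₁x s).unique hF
        rw [hval]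
        simp only [Function.comp_apply, hptL, hueq, hG L0, hHdef]
        simp only [← hL0, hG L0]
        field_simp
      -- Step 2: derivative of the explicit formula
      have hu2 : HasDerivAt (fun s => p (Function.update θ₀ j s) x) (p₁ j θ₀ x) (θ₀ j) :=
        hp₁x j θ₀
      have hu2eq : p (Function.update θ₀ j (θ₀ j)) x = p θ₀ x := by
        rw [Function.update_eq_self]
      have hdne2 : p (Function.update θ₀ j (θ₀ j)) x / p θ₀ x ≠ 0 := by
        rw [hu2eq]; exact (div_pos hpos hpos).ne'
      have hL2 : HasDerivAt
          (fun s => Real.log (p (Function.update θ₀ j s) x / p θ₀ x))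
          (p₁ j θ₀ x / p θ₀ x) (θ₀ j) := by
        have h6 := (Real.hasDerivAt_log hdne2).comp (θ₀ j) (hu2.div_const (p θ₀ x))
        have : (p (Function.update θ₀ j (θ₀ j)) x / p θ₀ x)⁻¹ * (p₁ j θ₀ x / p θ₀ x)
            = p₁ j θ₀ x / p θ₀ x := by
          rw [hu2eq, div_self hcne, inv_one, one_mul]
        rw [this] at h6
        exact h6
      have hL2pt : Real.log (p (Function.update θ₀ j (θ₀ j)) x / p θ₀ x) = 0 := by
        rw [hu2eq, div_self hcne, Real.log_one]
      have hHpt : HasDerivAt H (1 + a + b)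
          (Real.log (p (Function.update θ₀ j (θ₀ j)) x / p θ₀ x)) :=
        hL2pt.symm ▸ hHder
      have hHL := hHpt.comp (θ₀ j) hL2
      have hΦ := hp₂x.mul hHL
      -- Step 3: identify q₂ via the rational-dense argument
      have h0 : q₁ (θ₀ j) x = (fun s => p₁ k (Function.update θ₀ j s) x *
          (H ∘ fun s => Real.log (p (Function.update θ₀ j s) x / p θ₀ x)) s) (θ₀ j) := by
        have := step1 (θ₀ j) (by rw [Function.update_eq_self]; exact hpos)
        simpa using this
      have hqeq : ∀ q : ℚ, q₁ (q : ℝ) x = (fun s => p₁ k (Function.update θ₀ j s) x *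
          (H ∘ fun s => Real.log (p (Function.update θ₀ j s) x / p θ₀ x)) s) (q : ℝ) := by
        intro q
        simpa using step1 (q : ℝ) (hratx q)
      have key := eq_deriv_of_rat hq₂x hΦ h0 hqeq
      rw [key]
      simp only [Function.comp_apply, Function.update_eq_self, div_self hcne,
        Real.log_one, hH0, mul_one]
      field_simp
    have hfin : ∫ x, q₂ x ∂μ = (1 + a + b) *
        ∫ x, p θ₀ x * ((p₁ j θ₀ x / p θ₀ x) * (p₁ k θ₀ x / p θ₀ x)) ∂μ := by
      rw [integral_congr_ae hq2ae, integral_add hint₂ (hfish.const_mul _),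
        integral_const_mul, hvan₂, zero_add]
    have hfune : (fun s => dA (Function.update θ₀ j s)) = fun s => ∫ x, q₁ s x ∂μ :=
      funext hDUI₁
    rw [hfune, ← hfin]
    exact hDUI₂
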